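/- arXiv:1808.08116 — 3 statements merged into one kernel-verified Lean document; each statement's English description precedes it below -/
import Mathlib

section
/- Fix L ≥ 2, c, β, ω̄ > 0, φ_0 ∈ ℝ, and for l = 1,…,L−1 angles φ_l, ψ_l ∈ ℝ with Δ_l = φ_l − ψ_l and cos Δ_l ≠ −1; fix d > 0, d_{U,l}, d_{K,l} > 0, path powers P_0,…,P_{L−1} > 0, and positive reals s_{U,0}, s_{K,0}, s_{U,l}, s_{K,l}. For l ≥ 1 let f_l = [ (c²(1 + cos Δ_l)²/ω̄²)(d_{K,l}²/s_{K,l} + d_{U,l}²/s_{U,l}) + (c²/β²) sin² Δ_l ]^{−1}. Define the downlink matrix F ∈ ℝ^{3×3} (unknown node U is the receiver, per Theorem 1): F = P_0 (ω̄²/(c² d²)) ( s_{K,0} a aᵀ + s_{U,0} b bᵀ ) + Σ_{l≥1} P_l f_l z_l z_lᵀ − (1/K) w wᵀ, with a = (u_⊥(φ_0), 0), b = (u_⊥(φ_0), −d), z_l = (u_⊥(ψ_l) + u_⊥(φ_l) + sin(Δ_l) u(φ_0), −(1 + cos Δ_l) d_{U,l}), w = Σ_{l≥1} P_l sin(Δ_l)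 f_l z_l, K = P_0 β²/c² + Σ_{l≥1} P_l sin²(Δ_l) f_l. Define the uplink matrix G ∈ ℝ^{3×3} (U is the transmitter, per Theorem 2) by the same construction with the roles interchanged: with Δ'_l = ψ_l − φ_l, f'_l = [ (c²(1 + cos Δ'_l)²/ω̄²)(d_{U,l}²/s_{U,l} + d_{K,l}²/s_{K,l}) + (c²/β²) sin² Δ'_l ]^{−1}, G = P_0 (ω̄²/(c² d²)) ( s_{U,0} b bᵀ + s_{K,0} a aᵀ ) + Σ_{l≥1} P_l f'_l z'_l z'_lᵀ − (1/K') w' w'ᵀ, with z'_l = (u_⊥(φ_l) + u_⊥(ψ_l) − sin(Δ'_l) u(φ_0), −(1 + cos Δ'_l) d_{U,l}), w' = Σ_{l≥1} P_l sin(Δ'_l) f'_l z'_l, K' = P_0 β²/c² + Σ_{l≥1} P_l sin²(Δ'_l) f'_l. Then F = G. Consequently, scaling by the receive-SNR factors δ_DL, δ_UL > 0, the downlink and uplink position-and-orientation equivalent Fisher information matrices δ_DL F and δ_UL G differ only by the scalar δ_UL/δ_DL. -/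
open Real Matrix Finset

noncomputable section

/-- `u θ = (cos θ, sin θ)`. -/
def uv (θ : ℝ) : Fin 2 → ℝ := ![Real.cos θ, Real.sin θ]

/-- Downlink/uplink duality of single-anchor positioning (Section V of the paper):
the bracketed asymptotic position-and-orientation EFIM `F` of Theorem 1 (downlink:
the unknown node `U` is the receiver) and the EFIM `G` of Theorem 2 (uplink: `U` is
the transmitter) coincide, so the downlink and uplink EFIMs `δ_DL F` and `δ_UL G`
differ only by the scalar ratio `δ_UL/δ_DL` of the receive SNRs.
Here `φ₀` is the bearing from `U` to the known node `K`, `φ_l, ψ_l` the bearings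
from `U` resp. `K` to the `l`-th scatterer, `Δ_l = φ_l − ψ_l`, `Δ'_l = ψ_l − φ_l`,
`d, d_{U,l}, d_{K,l}` distances, `P_l` path powers, `β` the effective baseband
bandwidth, `ω̄` the effective angular carrier frequency, and `s_{U,l}, s_{K,l}` the
squared-array-aperture-function values. -/
theorem downlink_uplink_duality (L : ℕ) (hL : 2 ≤ L)
    (c0 β ωbar : ℝ) (hc : 0 < c0) (hβ : 0 < β) (hω : 0 < ωbar)
    (φ0 : ℝ) (φ ψ : ℕ → ℝ)
    (hΔ : ∀ l, 1 ≤ l → l < L → Real.cos (φ l - ψ l) ≠ -1)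
    (d : ℝ) (hd : 0 < d)
    (dU dK : ℕ → ℝ)
    (hdU : ∀ l, 1 ≤ l → l < L → 0 < dU l) (hdK : ∀ l, 1 ≤ l → l < L → 0 < dK l)
    (P : ℕ → ℝ) (hP : ∀ l, l < L → 0 < P l)
    (sU sK : ℕ → ℝ) (hsU : ∀ l, l < L → 0 < sU l) (hsK : ∀ l, l < L → 0 < sK l)
    -- the NLOS information intensities, downlink and uplink
    (f f' : ℕ → ℝ)
    (hf : ∀ l, f l = ((c0 ^ 2 * (1 + Real.cos (φ l - ψ l)) ^ 2 / ωbar ^ 2)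
        * (dK l ^ 2 / sK l + dU l ^ 2 / sU l)
        + (c0 ^ 2 / β ^ 2) * Real.sin (φ l - ψ l) ^ 2)⁻¹)
    (hf' : ∀ l, f' l = ((c0 ^ 2 * (1 + Real.cos (ψ l - φ l)) ^ 2 / ωbar ^ 2)
        * (dU l ^ 2 / sU l + dK l ^ 2 / sK l)
        + (c0 ^ 2 / β ^ 2) * Real.sin (ψ l - φ l) ^ 2)⁻¹)
    -- the information directions
    (a b : Fin 3 → ℝ)
    (ha : a = ![Real.sin φ0, -Real.cos φ0, 0])
    (hb : b = ![Real.sin φ0, -Real.cos φ0, -d])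
    (z z' : ℕ → Fin 3 → ℝ)
    (hz : ∀ l, z l = ![Real.sin (ψ l) + Real.sin (φ l)
          + Real.sin (φ l - ψ l) * Real.cos φ0,
        -Real.cos (ψ l) + -Real.cos (φ l) + Real.sin (φ l - ψ l) * Real.sin φ0,
        -(1 + Real.cos (φ l - ψ l)) * dU l])
    (hz' : ∀ l, z' l = ![Real.sin (φ l) + Real.sin (ψ l)
          - Real.sin (ψ l - φ l) * Real.cos φ0,
        -Real.cos (φ l) + -Real.cos (ψ l) - Real.sin (ψ l - φ l) * Real.sin φ0,
        -(1 + Real.cos (ψ l - φ l)) * dU l])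
    -- the coupling terms
    (w w' : Fin 3 → ℝ) (K K' : ℝ)
    (hw : w = ∑ l ∈ Ico 1 L, (P l * Real.sin (φ l - ψ l) * f l) • z l)
    (hK : K = P 0 * β ^ 2 / c0 ^ 2 + ∑ l ∈ Ico 1 L, P l * Real.sin (φ l - ψ l) ^ 2 * f l)
    (hw' : w' = ∑ l ∈ Ico 1 L, (P l * Real.sin (ψ l - φ l) * f' l) • z' l)
    (hK' : K' = P 0 * β ^ 2 / c0 ^ 2
      + ∑ l ∈ Ico 1 L, P l * Real.sin (ψ l - φ l) ^ 2 * f' l)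
    -- downlink and uplink bracketed EFIMs
    (F G : Matrix (Fin 3) (Fin 3) ℝ)
    (hF : F = (P 0 * (ωbar ^ 2 / (c0 ^ 2 * d ^ 2)))
        • (sK 0 • vecMulVec a a + sU 0 • vecMulVec b b)
      + ∑ l ∈ Ico 1 L, (P l * f l) • vecMulVec (z l) (z l)
      - K⁻¹ • vecMulVec w w)
    (hG : G = (P 0 * (ωbar ^ 2 / (c0 ^ 2 * d ^ 2)))
        • (sU 0 • vecMulVec b b + sK 0 • vecMulVec a a)
      + ∑ l ∈ Ico 1 L, (P l * f' l) • vecMulVec (z' l) (z' l)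
      - K'⁻¹ • vecMulVec w' w') :
    F = G ∧ ∀ δDL δUL : ℝ, 0 < δDL → 0 < δUL →
      δUL • G = (δUL / δDL) • (δDL • F) := by
  have hff : ∀ l, f' l = f l := by
    intro l
    rw [hf, hf']
    have h1 : Real.cos (ψ l - φ l) = Real.cos (φ l - ψ l) := by
      rw [← Real.cos_neg]; ring_nf
    have h2 : Real.sin (ψ l - φ l) ^ 2 = Real.sin (φ l - ψ l) ^ 2 := by
      rw [show ψ l - φ l = -(φ l - ψ l) by ring, Real.sin_neg]; ring
    rw [h1, h2]; ring_nf
  have hzz : ∀ l, z' l = z l := by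
    intro l
    rw [hz, hz']
    have h1 : Real.cos (ψ l - φ l) = Real.cos (φ l - ψ l) := by
      rw [← Real.cos_neg]; ring_nf
    have h2 : Real.sin (ψ l - φ l) = -Real.sin (φ l - ψ l) := by
      rw [show ψ l - φ l = -(φ l - ψ l) by ring, Real.sin_neg]
    rw [h1, h2]
    funext i; fin_cases i <;> simp <;> ring
  have hsin : ∀ l : ℕ, Real.sin (ψ l - φ l) = -Real.sin (φ l - ψ l) := by
    intro l; rw [show ψ l - φ l = -(φ l - ψ l) by ring, Real.sin_neg]
  have hww : w' = -w := by
    rw [hw, hw', ← Finset.sum_neg_distrib]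
    refine Finset.sum_congr rfl fun l _ => ?_
    rw [hzz, hff, hsin, ← neg_smul]; ring_nf
  have hKK : K' = K := by
    rw [hK, hK']
    congr 1
    refine Finset.sum_congr rfl fun l _ => ?_
    rw [hff, hsin]; ring
  have hFG : F = G := by
    rw [hF, hG, hww, hKK]
    have this : vecMulVec (-w) (-w) = vecMulVec w w := by
      funext i j; simp [vecMulVec]
    have hs : (∑ l ∈ Ico 1 L, (P l * f' l) • vecMulVec (z' l) (z' l))
        = ∑ l ∈ Ico 1 L, (P l * f l) • vecMulVec (z l) (z l) :=
      Finset.sum_congr rfl fun l _ => by rw [hzz, hff]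
    rw [this, hs, add_comm (sK 0 • vecMulVec a a)]
  refine ⟨hFG, fun δDL δUL h1 h2 => ?_⟩
  rw [hFG, smul_smul]
  congr 1
  field_simp
end
end

section
/- Let θ_T, θ_R ∈ ℝ, Δθ = θ_R − θ_T, and A, B, E > 0 with A (1 + cos Δθ)² (B + E) + B E sin² Δθ ≠ 0. Define J_s = A (u(θ_T) + u(θ_R))(u(θ_T) + u(θ_R))ᵀ + B u_⊥(θ_T) u_⊥(θ_T)ᵀ + E u_⊥(θ_R) u_⊥(θ_R)ᵀ ∈ ℝ^{2×2}. Then J_s is invertible and J_s^{−1} = (1/det J_s) [ A (u_⊥(θ_T) + u_⊥(θ_R))(u_⊥(θ_T) + u_⊥(θ_R))ᵀ + B u(θ_T) u(θ_T)ᵀ + E u(θ_R) u(θ_R)ᵀ ], where det J_s = A (1 + cos Δθ)² (B + E) + B E sin² Δθ. -/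
open Matrix Real

noncomputable section

/-- `u_⊥ θ = (sin θ, -cos θ)`. -/
def uperp (θ : ℝ) : Fin 2 → ℝ := ![Real.sin θ, -Real.cos θ]

/-- Inverse of the per-scatterer nuisance Fisher information block
`J_s = A (u(θ_T)+u(θ_R))(u(θ_T)+u(θ_R))ᵀ + B u_⊥(θ_T)u_⊥(θ_T)ᵀ + E u_⊥(θ_R)u_⊥(θ_R)ᵀ`:
it is invertible, its determinant is
`A (1+cos Δθ)²(B+E) + B E sin² Δθ`, and its inverse is the analogous combination with
each unit vector replaced by its orthogonal rotation, divided by the determinant. -/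
theorem inv_scatterer_block (θT θR A B E : ℝ) (hA : 0 < A) (hB : 0 < B) (hE : 0 < E)
    (hdet : A * (1 + Real.cos (θR - θT)) ^ 2 * (B + E)
        + B * E * Real.sin (θR - θT) ^ 2 ≠ 0) :
    IsUnit (A • vecMulVec (uv θT + uv θR) (uv θT + uv θR)
        + B • vecMulVec (uperp θT) (uperp θT)
        + E • vecMulVec (uperp θR) (uperp θR)) ∧
    (A • vecMulVec (uv θT + uv θR) (uv θT + uv θR)
        + B • vecMulVec (uperp θT) (uperp θT)
        + E • vecMulVec (uperp θR) (uperp θR)).det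
      = A * (1 + Real.cos (θR - θT)) ^ 2 * (B + E)
        + B * E * Real.sin (θR - θT) ^ 2 ∧
    (A • vecMulVec (uv θT + uv θR) (uv θT + uv θR)
        + B • vecMulVec (uperp θT) (uperp θT)
        + E • vecMulVec (uperp θR) (uperp θR))⁻¹
      = ((A • vecMulVec (uv θT + uv θR) (uv θT + uv θR)
        + B • vecMulVec (uperp θT) (uperp θT)
        + E • vecMulVec (uperp θR) (uperp θR)).det)⁻¹ •
        (A • vecMulVec (uperp θT + uperp θR) (uperp θT + uperp θR)
          + B • vecMulVec (uv θT) (uv θT)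
          + E • vecMulVec (uv θR) (uv θR)) := by
  set M := A • vecMulVec (uv θT + uv θR) (uv θT + uv θR)
      + B • vecMulVec (uperp θT) (uperp θT)
      + E • vecMulVec (uperp θR) (uperp θR) with hM
  set N := A • vecMulVec (uperp θT + uperp θR) (uperp θT + uperp θR)
      + B • vecMulVec (uv θT) (uv θT)
      + E • vecMulVec (uv θR) (uv θR) with hN
  set d := A * (1 + Real.cos (θR - θT)) ^ 2 * (B + E)
      + B * E * Real.sin (θR - θT) ^ 2 with hd
  have hdet2 : M.det = d := by
    simp only [hM, hd, Matrix.det_fin_two, Matrix.add_apply, Matrix.smul_apply,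
      Matrix.vecMulVec_apply, Pi.add_apply, uv, uperp, Matrix.cons_val_zero,
      Matrix.cons_val_one, Matrix.head_cons, smul_eq_mul]
    rw [Real.cos_sub, Real.sin_sub]
    linear_combination
      (A*B + 2*Real.sin θT*Real.sin θR*A*B + Real.sin θT^2*A*B
        + 2*Real.cos θT*Real.cos θR*A*B + Real.cos θT^2*A*B)
        * Real.sin_sq_add_cos_sq θT
      + (A*E + Real.sin θR^2*A*E + Real.cos θR^2*A*E
        + 2*Real.sin θT*Real.sin θR*A*E + 2*Real.cos θT*Real.cos θR*A*E)
        * Real.sin_sq_add_cos_sq θR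
  have e1 : Real.cos (θR - θT) = Real.cos θR * Real.cos θT + Real.sin θR * Real.sin θT :=
    Real.cos_sub θR θT
  have e2 : Real.sin (θR - θT) = Real.sin θR * Real.cos θT - Real.cos θR * Real.sin θT :=
    Real.sin_sub θR θT
  have hMN : M * N = d • (1 : Matrix (Fin 2) (Fin 2) ℝ) := by
    ext i j
    fin_cases i <;> fin_cases j
    · simp only [hM, hN, hd, Matrix.mul_apply, Fin.sum_univ_two, Matrix.add_apply,
        Matrix.smul_apply, Matrix.vecMulVec_apply, Pi.add_apply, uv, uperp,
        Fin.mk_zero, Fin.mk_one, Matrix.cons_val_zero, Matrix.cons_val_one, Matrix.head_cons, smul_eq_mul,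
        Matrix.one_fin_two, Matrix.of_apply, Matrix.cons_val', Matrix.empty_val', Matrix.cons_val_fin_one, Matrix.vecHead, Matrix.vecTail, mul_one, mul_zero, e1, e2]
      linear_combination
            (A*B + 2*Real.sin θT*Real.sin θR*A*B + Real.sin θT^2*A*B
              + 2*Real.cos θT*Real.cos θR*A*B + Real.cos θT^2*A*B)
              * Real.sin_sq_add_cos_sq θT
            + (A*E + Real.sin θR^2*A*E + Real.cos θR^2*A*E
              + 2*Real.sin θT*Real.sin θR*A*E + 2*Real.cos θT*Real.cos θR*A*E)
              * Real.sin_sq_add_cos_sq θR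
    · simp only [hM, hN, hd, Matrix.mul_apply, Fin.sum_univ_two, Matrix.add_apply,
        Matrix.smul_apply, Matrix.vecMulVec_apply, Pi.add_apply, uv, uperp,
        Fin.mk_zero, Fin.mk_one, Matrix.cons_val_zero, Matrix.cons_val_one, Matrix.head_cons, smul_eq_mul,
        Matrix.one_fin_two, Matrix.of_apply, Matrix.cons_val', Matrix.empty_val', Matrix.cons_val_fin_one, Matrix.vecHead, Matrix.vecTail, mul_one, mul_zero, e1, e2]
      first
        | ring
        | linear_combination
            (A*B + 2*Real.sin θT*Real.sin θR*A*B + Real.sin θT^2*A*B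
              + 2*Real.cos θT*Real.cos θR*A*B + Real.cos θT^2*A*B)
              * Real.sin_sq_add_cos_sq θT
            + (A*E + Real.sin θR^2*A*E + Real.cos θR^2*A*E
              + 2*Real.sin θT*Real.sin θR*A*E + 2*Real.cos θT*Real.cos θR*A*E)
              * Real.sin_sq_add_cos_sq θR
    · simp only [hM, hN, hd, Matrix.mul_apply, Fin.sum_univ_two, Matrix.add_apply,
        Matrix.smul_apply, Matrix.vecMulVec_apply, Pi.add_apply, uv, uperp,
        Fin.mk_zero, Fin.mk_one, Matrix.cons_val_zero, Matrix.cons_val_one, Matrix.head_cons, smul_eq_mul,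
        Matrix.one_fin_two, Matrix.of_apply, Matrix.cons_val', Matrix.empty_val', Matrix.cons_val_fin_one, Matrix.vecHead, Matrix.vecTail, mul_one, mul_zero, e1, e2]
      first
        | ring
        | linear_combination
            (A*B + 2*Real.sin θT*Real.sin θR*A*B + Real.sin θT^2*A*B
              + 2*Real.cos θT*Real.cos θR*A*B + Real.cos θT^2*A*B)
              * Real.sin_sq_add_cos_sq θT
            + (A*E + Real.sin θR^2*A*E + Real.cos θR^2*A*E
              + 2*Real.sin θT*Real.sin θR*A*E + 2*Real.cos θT*Real.cos θR*A*E)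
              * Real.sin_sq_add_cos_sq θR
    · simp only [hM, hN, hd, Matrix.mul_apply, Fin.sum_univ_two, Matrix.add_apply,
        Matrix.smul_apply, Matrix.vecMulVec_apply, Pi.add_apply, uv, uperp,
        Fin.mk_zero, Fin.mk_one, Matrix.cons_val_zero, Matrix.cons_val_one, Matrix.head_cons, smul_eq_mul,
        Matrix.one_fin_two, Matrix.of_apply, Matrix.cons_val', Matrix.empty_val', Matrix.cons_val_fin_one, Matrix.vecHead, Matrix.vecTail, mul_one, mul_zero, e1, e2]
      linear_combination
            (A*B + 2*Real.sin θT*Real.sin θR*A*B + Real.sin θT^2*A*B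
              + 2*Real.cos θT*Real.cos θR*A*B + Real.cos θT^2*A*B)
              * Real.sin_sq_add_cos_sq θT
            + (A*E + Real.sin θR^2*A*E + Real.cos θR^2*A*E
              + 2*Real.sin θT*Real.sin θR*A*E + 2*Real.cos θT*Real.cos θR*A*E)
              * Real.sin_sq_add_cos_sq θR
  have hunit : IsUnit M := by
    rw [Matrix.isUnit_iff_isUnit_det, hdet2, isUnit_iff_ne_zero]
    exact hdet
  have hinv : M⁻¹ = (M.det)⁻¹ • N := by
    apply Matrix.inv_eq_right_inv
    rw [hdet2, Matrix.mul_smul, hMN, smul_smul, inv_mul_cancel₀ hdet, one_smul]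
  exact ⟨hunit, hdet2, hinv⟩
end
end

section
/- Let n ≥ 1, m ≥ 0, u, z_1,…,z_m ∈ ℝⁿ, a_0 > 0, w_1,…,w_m ≥ 0, and s_1,…,s_m ∈ ℝ, and set K = a_0 + Σ_{l=1}^m w_l s_l² (so K > 0). Then a_0 u uᵀ + Σ_{l=1}^m w_l z_l z_lᵀ − (1/K)(a_0 u − Σ_{l=1}^m w_l s_l z_l)(a_0 u − Σ_{l=1}^m w_l s_l z_l)ᵀ = Σ_{l=1}^m w_l (z_l + s_l u)(z_l + s_l u)ᵀ − (1/K)(Σ_{l=1}^m w_l s_l (z_l + s_l u))(Σ_{l=1}^m w_l s_l (z_l + s_l u))ᵀ. -/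
open Matrix Finset

noncomputable section

/-- The matrix identity showing that as the clock-error variance tends to infinity,
the EFIM with imperfect knowledge of the time of transmission coincides with the
EFIM without knowledge of the time of transmission:
`a₀ u uᵀ + Σ w_l z_l z_lᵀ − (1/K)(a₀ u − Σ w_l s_l z_l)(⋯)ᵀ
  = Σ w_l (z_l + s_l u)(z_l + s_l u)ᵀ − (1/K)(Σ w_l s_l (z_l + s_l u))(⋯)ᵀ`,
where `K = a₀ + Σ w_l s_l²`. -/
theorem ktt_limit_matrix_identity (n m : ℕ) (hn : 1 ≤ n)
    (u : Fin n → ℝ) (z : ℕ → Fin n → ℝ) (a0 : ℝ) (ha0 : 0 < a0)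
    (w s : ℕ → ℝ) (hw : ∀ l, 1 ≤ l → l ≤ m → 0 ≤ w l) :
    (0 < a0 + ∑ l ∈ Icc 1 m, w l * s l ^ 2) ∧
    a0 • vecMulVec u u + ∑ l ∈ Icc 1 m, w l • vecMulVec (z l) (z l)
      - (a0 + ∑ l ∈ Icc 1 m, w l * s l ^ 2)⁻¹ •
        vecMulVec (a0 • u - ∑ l ∈ Icc 1 m, (w l * s l) • z l)
                  (a0 • u - ∑ l ∈ Icc 1 m, (w l * s l) • z l)
    = ∑ l ∈ Icc 1 m, w l • vecMulVec (z l + s l • u) (z l + s l • u)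
      - (a0 + ∑ l ∈ Icc 1 m, w l * s l ^ 2)⁻¹ •
        vecMulVec (∑ l ∈ Icc 1 m, (w l * s l) • (z l + s l • u))
                  (∑ l ∈ Icc 1 m, (w l * s l) • (z l + s l • u)) := by
  have hS : 0 ≤ ∑ l ∈ Icc 1 m, w l * s l ^ 2 :=
    Finset.sum_nonneg fun l hl =>
      mul_nonneg (hw l (mem_Icc.mp hl).1 (mem_Icc.mp hl).2) (sq_nonneg _)
  have hK : 0 < a0 + ∑ l ∈ Icc 1 m, w l * s l ^ 2 := by linarith
  refine ⟨hK, ?_⟩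
  have hKne : (a0 + ∑ l ∈ Icc 1 m, w l * s l ^ 2) ≠ 0 := ne_of_gt hK
  ext i j
  simp only [Matrix.sub_apply, Matrix.add_apply, Matrix.smul_apply, Matrix.sum_apply, Finset.sum_apply,
    vecMulVec_apply, Pi.add_apply, Pi.sub_apply, Pi.smul_apply, smul_eq_mul]
  have h1 : (∑ l ∈ Icc 1 m, w l * ((z l i + s l * u i) * (z l j + s l * u j)))
      = (∑ l ∈ Icc 1 m, w l * (z l i * z l j))
        + u j * (∑ l ∈ Icc 1 m, (w l * s l) * z l i)
        + u i * (∑ l ∈ Icc 1 m, (w l * s l) * z l j)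
        + u i * u j * (∑ l ∈ Icc 1 m, w l * s l ^ 2) := by
    simp only [Finset.mul_sum]
    rw [← Finset.sum_add_distrib, ← Finset.sum_add_distrib, ← Finset.sum_add_distrib]
    exact Finset.sum_congr rfl fun l _ => by ring
  have h2 : ∀ k : Fin n, (∑ l ∈ Icc 1 m, (w l * s l) * (z l k + s l * u k))
      = (∑ l ∈ Icc 1 m, (w l * s l) * z l k)
        + u k * (∑ l ∈ Icc 1 m, w l * s l ^ 2) := by
    intro k
    simp only [Finset.mul_sum]
    rw [← Finset.sum_add_distrib]
    exact Finset.sum_congr rfl fun l _ => by ring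
  rw [h1, h2, h2]
  set S := ∑ l ∈ Icc 1 m, w l * s l ^ 2
  set Ai := ∑ l ∈ Icc 1 m, (w l * s l) * z l i
  set Aj := ∑ l ∈ Icc 1 m, (w l * s l) * z l j
  field_simp
  ring
end
end
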